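/- arXiv:2204.06982 — 4 statements merged into one kernel-verified Lean document; each statement's English description precedes it below -/
import Mathlib

section
/- Let 0<α<1 and 1<b<2, let X = X_α(γ,1,0) be a positive α-stable random variable with density f and Laplace transform exp(−λ t^α), λ>0. Define the density f̃(x) = (1/(α·E[X^{α(b−1)}])) · f(x^{−1/α}) / x^{b+1/α} for x>0, and let Z>0 be a random variable with density f̃. Then for all complex r with Re(r) > b−2, E[Z^r] = λ^{−r} · Γ(2−b+r)·Γ(1−α(b−1)) / (Γ(2−b)·Γ(1−α(b−r−1))). -/
open MeasureTheory Complex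

namespace DiluteAux

open Set

lemma xexp_le {c x : ℝ} (hc : 0 < c) (hx : 0 ≤ x) :
    x * Real.exp (-(c * x)) ≤ 1 / (c * Real.exp 1) := by
  have h1 : (c * x - 1) + 1 ≤ Real.exp (c * x - 1) := Real.add_one_le_exp _
  have h2 : Real.exp (c * x - 1) * Real.exp 1 = Real.exp (c * x) := by
    rw [← Real.exp_add]; ring_nf
  have he := Real.exp_pos (1:ℝ)
  have hex := Real.exp_pos (c * x)
  have h3 : c * x * Real.exp 1 ≤ Real.exp (c * x) := by nlinarith
  rw [Real.exp_neg, ← div_eq_mul_inv, div_le_div_iff₀ hex (by positivity)]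
  nlinarith

lemma gamma_ne_zero_of_re_pos {z : ℂ} (hz : 0 < z.re) : Complex.Gamma z ≠ 0 := by
  apply Complex.Gamma_ne_zero
  intro m hm
  apply_fun Complex.re at hm
  simp only [Complex.neg_re, Complex.natCast_re] at hm
  have : (0:ℝ) ≤ m := Nat.cast_nonneg m
  linarith

lemma integral_ofReal'' {μ : Measure ℝ} {g : ℝ → ℝ} :
    (((∫ x, g x ∂μ : ℝ)) : ℂ) = ∫ x, ((g x : ℝ) : ℂ) ∂μ :=
  integral_ofReal.symm

lemma ofReal_cpow_mul {x : ℝ} (hx : 0 < x) (a : ℝ) (z : ℂ) :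
    (((x ^ a : ℝ)) : ℂ) ^ z = (x:ℂ) ^ ((a:ℂ) * z) := by
  rw [Complex.ofReal_cpow hx.le, ← Complex.cpow_mul]
  · rw [← Complex.ofReal_log hx.le, ← Complex.ofReal_mul, Complex.ofReal_im]
    exact neg_neg_iff_pos.mpr Real.pi_pos
  · rw [← Complex.ofReal_log hx.le, ← Complex.ofReal_mul, Complex.ofReal_im]
    exact Real.pi_pos.le

lemma int_exp {α lam : ℝ} (hα : 0 < α) (hlam : 0 < lam) {c : ℝ} (hc : 0 < c) :
    IntegrableOn (fun t : ℝ => t ^ (c - 1) * Real.exp (-(lam * t ^ α))) (Ioi 0) := by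
  have hg : IntegrableOn (fun u : ℝ => u ^ (c / α - 1) * Real.exp (-(lam * u))) (Ioi 0) := by
    have h0 := Real.GammaIntegral_convergent (div_pos hc hα)
    have h1 : IntegrableOn
        (fun x : ℝ => Real.exp (-(lam * x)) * (lam * x) ^ (c / α - 1)) (Ioi 0) := by
      have := (integrableOn_Ioi_comp_mul_left_iff
        (fun x : ℝ => Real.exp (-x) * x ^ (c / α - 1)) 0 hlam).mpr (by simpa using h0)
      simpa using this
    have h2 := h1.const_mul ((lam ^ (c / α - 1))⁻¹)
    refine IntegrableOn.congr_fun h2 (fun x hx => ?_) measurableSet_Ioi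
    have hx0 : (0:ℝ) < x := hx
    rw [Real.mul_rpow hlam.le hx0.le]
    have hlr : (0:ℝ) < lam ^ (c / α - 1) := Real.rpow_pos_of_pos hlam _
    field_simp
  have h3 := (integrableOn_Ioi_comp_rpow_iff'
      (fun u : ℝ => u ^ (c / α - 1) * Real.exp (-(lam * u))) hα.ne').mpr hg
  refine h3.congr_fun (fun x hx => ?_) measurableSet_Ioi
  have hx0 : (0:ℝ) < x := hx
  beta_reduce
  rw [smul_eq_mul, ← Real.rpow_mul hx0.le, ← mul_assoc, ← Real.rpow_add hx0]
  congr 2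
  field_simp
  ring


lemma gamma_int {α lam : ℝ} (hα : 0 < α) (hlam : 0 < lam) {w : ℂ} (hw : 0 < w.re) :
    ∫ t in Ioi (0:ℝ), (t:ℂ) ^ (w - 1) * (Real.exp (-(lam * t ^ α)) : ℂ)
      = (α:ℂ)⁻¹ * ((1 / (lam:ℂ)) ^ (w / (α:ℂ)) * Complex.Gamma (w / (α:ℂ))) := by
  have hα' : (α:ℂ) ≠ 0 := Complex.ofReal_ne_zero.mpr hα.ne'
  have h2 : ∫ u in Ioi (0:ℝ), (u:ℂ) ^ (w / (α:ℂ) - 1) * (Real.exp (-(lam * u)) : ℂ)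
      = (1 / (lam:ℂ)) ^ (w / (α:ℂ)) * Complex.Gamma (w / (α:ℂ)) := by
    have hre : 0 < (w / (α:ℂ)).re := by
      rw [Complex.div_ofReal_re]; positivity
    rw [← integral_cpow_mul_exp_neg_mul_Ioi hre hlam]
    refine setIntegral_congr_fun measurableSet_Ioi (fun u hu => ?_)
    rw [Complex.ofReal_exp]
    push_cast
    ring_nf
  have h1 := MeasureTheory.integral_comp_rpow_Ioi
      (fun u : ℝ => (u:ℂ) ^ (w / (α:ℂ) - 1) * (Real.exp (-(lam * u)) : ℂ)) hα.ne'
  rw [h2] at h1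
  have h3 : ∫ x in Ioi (0:ℝ),
      (|α| * x ^ (α - 1)) • (((x ^ α : ℝ):ℂ) ^ (w / (α:ℂ) - 1) * (Real.exp (-(lam * x ^ α)) : ℂ))
      = (α:ℂ) * ∫ t in Ioi (0:ℝ), (t:ℂ) ^ (w - 1) * (Real.exp (-(lam * t ^ α)) : ℂ) := by
    rw [← integral_const_mul]
    refine setIntegral_congr_fun measurableSet_Ioi (fun x hx => ?_)
    have hx0 : (0:ℝ) < x := hx
    have hxc : (x:ℂ) ≠ 0 := Complex.ofReal_ne_zero.mpr hx0.ne'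
    rw [ofReal_cpow_mul hx0 α (w / (α:ℂ) - 1), Complex.real_smul]
    rw [abs_of_pos hα]
    have e1 : (α:ℂ) * (w / (α:ℂ) - 1) = (w - 1) - ((α:ℂ) - 1) := by
      field_simp
      ring
    rw [e1]
    have e2 : ((α * x ^ (α - 1) : ℝ) : ℂ) = (α:ℂ) * (x:ℂ) ^ ((α:ℂ) - 1) := by
      rw [Complex.ofReal_mul, Complex.ofReal_cpow hx0.le]
      norm_cast
    rw [e2]
    have e3 : (x:ℂ) ^ (w - 1) = (x:ℂ) ^ ((α:ℂ) - 1) * (x:ℂ) ^ ((w - 1) - ((α:ℂ) - 1)) := by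
      rw [← Complex.cpow_add _ _ hxc]; ring_nf
    rw [e3]
    ring
  rw [h3] at h1
  field_simp [← h1]
  linear_combination h1



lemma laplace_deriv {α lam : ℝ} (hα0 : 0 < α) (hlam : 0 < lam)
    {f : ℝ → ℝ} (hf_nonneg : ∀ x, 0 ≤ f x)
    (hf_int : IntegrableOn f (Ioi 0))
    (hRL : ∀ t : ℝ, 0 ≤ t →
      ∫ x in Ioi (0:ℝ), f x * Real.exp (-(x * t)) = Real.exp (-(lam * t ^ α)))
    {t : ℝ} (ht : 0 < t) :
    IntegrableOn (fun x => x * f x * Real.exp (-(x * t))) (Ioi 0) ∧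
    ∫ x in Ioi (0:ℝ), x * f x * Real.exp (-(x * t))
      = lam * α * t ^ (α - 1) * Real.exp (-(lam * t ^ α)) := by
  set ν := volume.restrict (Ioi (0:ℝ)) with hν
  have hmeas : ∀ u : ℝ, AEStronglyMeasurable (fun x => f x * Real.exp (-(x * u))) ν := by
    intro u
    exact hf_int.aestronglyMeasurable.mul
      ((Real.continuous_exp.comp ((continuous_id.mul continuous_const).neg)).aestronglyMeasurable)
  have hF_int : Integrable (fun x => f x * Real.exp (-(x * t))) ν := by
    refine Integrable.mono' hf_int (hmeas t) ?_
    rw [hν, ae_restrict_iff' measurableSet_Ioi]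
    filter_upwards with x hx
    rw [Real.norm_eq_abs, abs_mul, _root_.abs_of_nonneg (hf_nonneg x), _root_.abs_of_nonneg (Real.exp_pos _).le]
    nth_rewrite 2 [← mul_one (f x)]
    refine mul_le_mul_of_nonneg_left ?_ (hf_nonneg x)
    exact Real.exp_le_one_iff.mpr (by nlinarith [mem_Ioi.mp hx])
  have hF'_meas : AEStronglyMeasurable (fun x => -(x * f x * Real.exp (-(x * t)))) ν := by
    exact (((aestronglyMeasurable_id.mul hf_int.aestronglyMeasurable).mul
      ((Real.continuous_exp.comp ((continuous_id.mul continuous_const).neg)).aestronglyMeasurable)).neg)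
  have key := hasDerivAt_integral_of_dominated_loc_of_deriv_le (Metric.ball_mem_nhds t (half_pos ht))
      (F := fun u x => f x * Real.exp (-(x * u)))
      (F' := fun u x => -(x * f x * Real.exp (-(x * u))))
      (bound := fun x => (1 / ((t/2) * Real.exp 1)) * f x)
      (μ := ν) (x₀ := t)
      (Filter.Eventually.of_forall hmeas) hF_int hF'_meas
      ?_ (hf_int.const_mul _) ?_
  · obtain ⟨hint, hderiv⟩ := key
    have hg : HasDerivAt (fun u : ℝ => Real.exp (-(lam * u ^ α)))
        (Real.exp (-(lam * t ^ α)) * -(lam * (α * t ^ (α - 1)))) t := by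
      have h1 : HasDerivAt (fun u : ℝ => u ^ α) (α * t ^ (α - 1)) t :=
        Real.hasDerivAt_rpow_const (Or.inl ht.ne')
      exact ((h1.const_mul lam).neg).exp
    have heq : (fun u : ℝ => ∫ x, f x * Real.exp (-(x * u)) ∂ν)
        =ᶠ[nhds t] (fun u : ℝ => Real.exp (-(lam * u ^ α))) := by
      filter_upwards [Ioi_mem_nhds ht] with u hu
      exact hRL u (le_of_lt hu)
    have hderiv2 : HasDerivAt (fun u : ℝ => Real.exp (-(lam * u ^ α)))
        (∫ x, -(x * f x * Real.exp (-(x * t))) ∂ν) t :=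
      hderiv.congr_of_eventuallyEq heq.symm
    have huniq := hderiv2.unique hg
    rw [integral_neg] at huniq
    constructor
    · have h2 : (fun x => x * f x * Real.exp (-(x * t)))
          = fun x => -(-(x * f x * Real.exp (-(x * t)))) := by funext x; ring
      rw [show IntegrableOn (fun x => x * f x * Real.exp (-(x * t))) (Ioi 0) volume
          = Integrable (fun x => x * f x * Real.exp (-(x * t))) ν from rfl, h2]
      exact hint.neg
    · have h3 : ∫ x in Ioi (0:ℝ), x * f x * Real.exp (-(x * t))
          = -(Real.exp (-(lam * t ^ α)) * -(lam * (α * t ^ (α - 1)))) := by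
        rw [← huniq]; ring
      rw [h3]; ring
  · rw [hν, ae_restrict_iff' measurableSet_Ioi]
    filter_upwards with x hx
    intro u hu
    have hx0 : (0:ℝ) < x := hx
    have hu2 : t / 2 < u := by
      have := abs_sub_lt_iff.mp (Metric.mem_ball.mp hu)
      linarith [this.2]
    rw [Real.norm_eq_abs, abs_neg, abs_mul, abs_mul, _root_.abs_of_nonneg hx0.le,
      _root_.abs_of_nonneg (hf_nonneg x), _root_.abs_of_nonneg (Real.exp_pos _).le]
    have hb1 : x * Real.exp (-(x * u)) ≤ x * Real.exp (-(t/2 * x)) := by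
      refine mul_le_mul_of_nonneg_left (Real.exp_le_exp.mpr (by nlinarith)) hx0.le
    have hb2 : x * Real.exp (-(t/2 * x)) ≤ 1 / ((t/2) * Real.exp 1) :=
      xexp_le (half_pos ht) hx0.le
    calc x * f x * Real.exp (-(x * u)) = (x * Real.exp (-(x * u))) * f x := by ring
      _ ≤ (1 / ((t/2) * Real.exp 1)) * f x := by
          refine mul_le_mul_of_nonneg_right ?_ (hf_nonneg x)
          exact le_trans hb1 hb2
  · filter_upwards with x
    intro u hu
    have h : HasDerivAt (fun u : ℝ => -(x * u)) (-x) u := by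
      exact (((hasDerivAt_id u).const_mul x).neg).congr_deriv (by ring)
    have := (h.exp).const_mul (f x)
    exact HasDerivAt.congr_deriv this (by ring)


set_option maxHeartbeats 1000000 in
lemma master {α lam : ℝ} (hα0 : 0 < α) (hα1 : α < 1) (hlam : 0 < lam)
    {f : ℝ → ℝ} (hf_nonneg : ∀ x, 0 ≤ f x) (hf_int : IntegrableOn f (Ioi 0))
    (hRL : ∀ t : ℝ, 0 ≤ t →
      ∫ x in Ioi (0:ℝ), f x * Real.exp (-(x * t)) = Real.exp (-(lam * t ^ α)))
    {s : ℂ} (hs : s.re < α) :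
    ∫ x in Ioi (0:ℝ), (x:ℂ) ^ s * (f x : ℂ)
      = (lam:ℂ) ^ (s / (α:ℂ)) * Complex.Gamma (1 - s / (α:ℂ)) / Complex.Gamma (1 - s) := by
  have hαc : (α:ℂ) ≠ 0 := Complex.ofReal_ne_zero.mpr hα0.ne'
  have hlc : (lam:ℂ) ≠ 0 := Complex.ofReal_ne_zero.mpr hlam.ne'
  have hG1s : Complex.Gamma (1 - s) ≠ 0 := by
    refine gamma_ne_zero_of_re_pos ?_
    rw [Complex.sub_re, Complex.one_re]; linarith
  set Fc : ℝ → ℝ → ℂ := fun t x =>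
    ((t:ℂ) ^ (-s)) * ((x * f x : ℝ) : ℂ) * ((Real.exp (-(x * t)) : ℝ) : ℂ) with hFc
  have hA : AEStronglyMeasurable (fun t : ℝ => (t:ℂ) ^ (-s))
      (volume.restrict (Ioi (0:ℝ))) := by
    refine ContinuousOn.aestronglyMeasurable ?_ measurableSet_Ioi
    intro t ht
    exact ((continuousAt_cpow_const (Or.inl (by simpa using (mem_Ioi.mp ht)))).comp
      Complex.continuous_ofReal.continuousAt).continuousWithinAt
  have hB : AEStronglyMeasurable (fun x : ℝ => ((x * f x : ℝ) : ℂ))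
      (volume.restrict (Ioi (0:ℝ))) :=
    Complex.continuous_ofReal.comp_aestronglyMeasurable
      (aestronglyMeasurable_id.mul hf_int.aestronglyMeasurable)
  have hC : Continuous (fun p : ℝ × ℝ => ((Real.exp (-(p.2 * p.1)) : ℝ) : ℂ)) :=
    Complex.continuous_ofReal.comp
      (Real.continuous_exp.comp (continuous_snd.mul continuous_fst).neg)
  have hFmeas : AEStronglyMeasurable (fun p : ℝ × ℝ => Fc p.1 p.2)
      ((volume.restrict (Ioi (0:ℝ))).prod (volume.restrict (Ioi (0:ℝ)))) :=
    (hA.comp_fst.mul hB.comp_snd).mul hC.aestronglyMeasurable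
  have h_sec : ∀ᵐ t ∂(volume.restrict (Ioi (0:ℝ))),
      Integrable (fun x => Fc t x) (volume.restrict (Ioi (0:ℝ))) := by
    rw [ae_restrict_iff' measurableSet_Ioi]
    filter_upwards with t ht'
    have ht : (0:ℝ) < t := ht'
    have h1 := ((laplace_deriv hα0 hlam hf_nonneg hf_int hRL ht).1.ofReal
      (𝕜 := ℂ)).const_mul ((t:ℂ) ^ (-s))
    refine h1.congr (Filter.Eventually.of_forall fun x => ?_)
    show (t:ℂ)^(-s) * ((x * f x * Real.exp (-(x*t)) : ℝ):ℂ) = Fc t x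
    rw [hFc]
    push_cast
    ring
  have h_norm : Integrable (fun t => ∫ x, ‖Fc t x‖ ∂(volume.restrict (Ioi (0:ℝ))))
      (volume.restrict (Ioi (0:ℝ))) := by
    have hGint : IntegrableOn
        (fun t : ℝ => (lam * α) * (t ^ ((α - s.re) - 1) * Real.exp (-(lam * t ^ α))))
        (Ioi 0) := (int_exp hα0 hlam (by linarith)).const_mul _
    refine Integrable.congr hGint ?_
    rw [Filter.eventuallyEq_iff_exists_mem]
    refine ⟨Ioi 0, self_mem_ae_restrict measurableSet_Ioi, fun t ht' => ?_⟩
    have ht : (0:ℝ) < t := ht'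
    have hval : ∫ x, ‖Fc t x‖ ∂(volume.restrict (Ioi (0:ℝ)))
        = t ^ (-s.re) * (lam * α * t ^ (α - 1) * Real.exp (-(lam * t ^ α))) := by
      rw [← (laplace_deriv hα0 hlam hf_nonneg hf_int hRL ht).2, ← integral_const_mul]
      refine setIntegral_congr_fun measurableSet_Ioi (fun x hx' => ?_)
      have hx0 : (0:ℝ) < x := hx'
      rw [hFc]
      simp only []
      rw [norm_mul, norm_mul,
        Complex.norm_cpow_eq_rpow_re_of_pos ht, Complex.norm_real, Complex.norm_real,
        Real.norm_eq_abs, Real.norm_eq_abs,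
        Complex.neg_re, _root_.abs_of_nonneg (mul_nonneg hx0.le (hf_nonneg x)),
        _root_.abs_of_nonneg (Real.exp_pos _).le]
      ring
    show lam * α * (t ^ (α - s.re - 1) * Real.exp (-(lam * t ^ α)))
        = ∫ x in Ioi (0:ℝ), ‖Fc t x‖
    rw [hval, show α - s.re - 1 = -s.re + (α - 1) from by ring, Real.rpow_add ht]
    ring
  have hFint : Integrable (Function.uncurry Fc)
      ((volume.restrict (Ioi (0:ℝ))).prod (volume.restrict (Ioi (0:ℝ)))) :=
    (integrable_prod_iff hFmeas).mpr ⟨h_sec, h_norm⟩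
  have hswap := integral_integral_swap hFint
  have hLHS : (∫ t, (∫ x, Fc t x ∂(volume.restrict (Ioi (0:ℝ))))
        ∂(volume.restrict (Ioi (0:ℝ))))
      = (lam:ℂ) ^ (s / (α:ℂ)) * Complex.Gamma (1 - s/(α:ℂ)) := by
    have e1 : ∀ t ∈ Ioi (0:ℝ), (∫ x, Fc t x ∂(volume.restrict (Ioi (0:ℝ))))
        = ((lam * α : ℝ):ℂ) *
          ((t:ℂ)^(((α:ℂ) - s) - 1) * ((Real.exp (-(lam * t^α)) : ℝ) : ℂ)) := by
      intro t ht'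
      have ht : (0:ℝ) < t := ht'
      have hstep : (∫ x, Fc t x ∂(volume.restrict (Ioi (0:ℝ))))
          = (t:ℂ)^(-s) * ((lam * α * t^(α-1) * Real.exp (-(lam * t^α)) : ℝ) : ℂ) := by
        rw [← (laplace_deriv hα0 hlam hf_nonneg hf_int hRL ht).2]
        rw [integral_ofReal'', ← integral_const_mul]
        refine setIntegral_congr_fun measurableSet_Ioi (fun x hx' => ?_)
        rw [hFc]
        push_cast
        ring
      rw [hstep]
      have e2 : (t:ℂ)^(-s) * ((t:ℂ)^(((α:ℂ) - 1))) = (t:ℂ)^(((α:ℂ) - s) - 1) := by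
        rw [← Complex.cpow_add _ _ (Complex.ofReal_ne_zero.mpr ht.ne')]
        ring_nf
      have e3 : ((t ^ (α-1) : ℝ) : ℂ) = (t:ℂ)^(((α:ℂ) - 1)) := by
        rw [Complex.ofReal_cpow ht.le]; norm_cast
      push_cast [e3]
      rw [← e2]
      ring
    rw [setIntegral_congr_fun measurableSet_Ioi e1, integral_const_mul,
      gamma_int hα0 hlam (w := (α:ℂ) - s)
        (by rw [Complex.sub_re, Complex.ofReal_re]; linarith)]
    have hw : ((α:ℂ) - s)/(α:ℂ) = 1 - s/(α:ℂ) := by field_simp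
    rw [hw]
    have h1l : (1/(lam:ℂ))^(1 - s/(α:ℂ)) = (lam:ℂ)^(s/(α:ℂ) - 1) := by
      rw [one_div, Complex.inv_cpow _ _
        (by rw [Complex.arg_ofReal_of_nonneg hlam.le]; exact Real.pi_ne_zero.symm),
        ← Complex.cpow_neg]
      norm_num
    have h2l : (lam:ℂ)^(s/(α:ℂ)) = (lam:ℂ) * (lam:ℂ)^(s/(α:ℂ) - 1) := by
      nth_rewrite 2 [← Complex.cpow_one (lam:ℂ)]
      rw [← Complex.cpow_add _ _ hlc]
      ring_nf
    rw [h1l, h2l]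
    push_cast
    field_simp
  have hRHS : (∫ x, (∫ t, Fc t x ∂(volume.restrict (Ioi (0:ℝ))))
        ∂(volume.restrict (Ioi (0:ℝ))))
      = Complex.Gamma (1-s) * ∫ x in Ioi (0:ℝ), (x:ℂ)^s * (f x:ℂ) := by
    rw [← integral_const_mul]
    refine setIntegral_congr_fun measurableSet_Ioi (fun x hx' => ?_)
    have hx : (0:ℝ) < x := hx'
    have hxc : (x:ℂ) ≠ 0 := Complex.ofReal_ne_zero.mpr hx.ne'
    have hre1s : 0 < ((1:ℂ) - s).re := by
      rw [Complex.sub_re, Complex.one_re]; linarith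
    have hinner : ∫ t, Fc t x ∂(volume.restrict (Ioi (0:ℝ)))
        = ((x * f x:ℝ):ℂ) * ((1/(x:ℂ))^((1:ℂ)-s) * Complex.Gamma (1-s)) := by
      rw [← integral_cpow_mul_exp_neg_mul_Ioi hre1s hx, ← integral_const_mul]
      refine setIntegral_congr_fun measurableSet_Ioi (fun t ht' => ?_)
      rw [hFc]
      simp only []
      rw [show ((1:ℂ) - s) - 1 = -s from by ring, Complex.ofReal_exp]
      push_cast
      ring
    rw [hinner]
    have h1x : (1/(x:ℂ))^((1:ℂ)-s) = (x:ℂ)^(s - 1) := by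
      rw [one_div, Complex.inv_cpow _ _
        (by rw [Complex.arg_ofReal_of_nonneg hx.le]; exact Real.pi_ne_zero.symm),
        ← Complex.cpow_neg]
      norm_num
    have h2x : (x:ℂ)^s = (x:ℂ) * (x:ℂ)^(s - 1) := by
      nth_rewrite 2 [← Complex.cpow_one (x:ℂ)]
      rw [← Complex.cpow_add _ _ hxc]
      ring_nf
    rw [h1x, h2x]
    push_cast
    ring
  rw [hLHS, hRHS] at hswap
  rw [eq_div_iff hG1s]
  linear_combination -hswap

end DiluteAux

/-- complex moments of the dilute-regime limit `Z`.  Let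
`0 < α < 1`, `1 < b < 2`, let `f` be the density (on `(0,∞)`) of the positive
`α`-stable law with Laplace transform `exp(-λ t^α)`, and let `Z > 0` have density
`f̃(x) = f(x^{-1/α}) / (α · E[X^{α(b-1)}] · x^{b+1/α})`.  Then for every complex `r`
with `Re r > b - 2`,
`E[Z^r] = λ^{-r} Γ(2-b+r) Γ(1-α(b-1)) / (Γ(2-b) Γ(1-α(b-r-1)))`. -/
theorem dilute_Z_moments
    (α b lam : ℝ) (hα0 : 0 < α) (hα1 : α < 1) (hb1 : 1 < b) (hb2 : b < 2)
    (hlam : 0 < lam)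
    (f : ℝ → ℝ) (hf_nonneg : ∀ x, 0 ≤ f x)
    (hf_prob : ∫ x in Set.Ioi (0 : ℝ), f x = 1)
    (hLaplace : ∀ t : ℂ, 0 ≤ t.re →
      ∫ x in Set.Ioi (0 : ℝ), (f x : ℂ) * Complex.exp (-t * (x : ℂ)) =
        Complex.exp (-(lam : ℂ) * t ^ (α : ℂ)))
    (m : ℝ) (hm : m = ∫ x in Set.Ioi (0 : ℝ), x ^ (α * (b - 1)) * f x)
    (ftilde : ℝ → ℝ)
    (hftilde : ∀ x : ℝ, 0 < x →
      ftilde x = f (x ^ (-(1 / α))) / (α * m * x ^ (b + 1 / α))) :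
    ∀ r : ℂ, b - 2 < r.re →
      ∫ x in Set.Ioi (0 : ℝ), (x : ℂ) ^ r * (ftilde x : ℂ) =
        (lam : ℂ) ^ (-r) * Complex.Gamma (2 - b + r) * Complex.Gamma (1 - α * (b - 1)) /
          (Complex.Gamma (2 - (b : ℂ)) * Complex.Gamma (1 - (α : ℂ) * (b - r - 1))) := by
  intro r hr
  have hαc : (α:ℂ) ≠ 0 := Complex.ofReal_ne_zero.mpr hα0.ne'
  have hlc : (lam:ℂ) ≠ 0 := Complex.ofReal_ne_zero.mpr hlam.ne'
  have hf_int : MeasureTheory.IntegrableOn f (Set.Ioi 0) := by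
    by_contra h
    rw [MeasureTheory.integral_undef h] at hf_prob
    norm_num at hf_prob
  have hRL : ∀ t : ℝ, 0 ≤ t →
      ∫ x in Set.Ioi (0:ℝ), f x * Real.exp (-(x * t)) = Real.exp (-(lam * t ^ α)) := by
    intro t ht
    have h := hLaplace (t:ℂ) (by simpa using ht)
    have h1 : ∫ x in Set.Ioi (0:ℝ), (f x : ℂ) * Complex.exp (-(t:ℂ) * (x:ℂ))
        = ((∫ x in Set.Ioi (0:ℝ), f x * Real.exp (-(x * t)) : ℝ) : ℂ) := by
      rw [DiluteAux.integral_ofReal'']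
      refine MeasureTheory.setIntegral_congr_fun measurableSet_Ioi (fun x hx => ?_)
      rw [Complex.ofReal_mul, Complex.ofReal_exp]
      congr 2
      push_cast
      ring
    have h2 : Complex.exp (-(lam:ℂ) * (t:ℂ) ^ (α:ℂ))
        = ((Real.exp (-(lam * t ^ α)) : ℝ) : ℂ) := by
      rw [Complex.ofReal_exp]
      congr 1
      rw [Complex.ofReal_neg, Complex.ofReal_mul, Complex.ofReal_cpow ht]
      ring
    have := h1.symm.trans (h.trans h2)
    exact_mod_cast this
  have hmaster : ∀ s : ℂ, s.re < α →
      ∫ x in Set.Ioi (0:ℝ), (x:ℂ) ^ s * (f x : ℂ)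
        = (lam:ℂ) ^ (s / (α:ℂ)) * Complex.Gamma (1 - s / (α:ℂ)) / Complex.Gamma (1 - s) :=
    fun s hs => DiluteAux.master hα0 hα1 hlam hf_nonneg hf_int hRL hs
  have hb10 : (0:ℝ) < b - 1 := by linarith
  have hs0 : (α * (b-1)) < α := by nlinarith
  have hs0' : (0:ℝ) < α * (b-1) := by positivity
  -- Gamma nonvanishing facts
  have hG2b : Complex.Gamma (2 - (b:ℂ)) ≠ 0 := by
    refine DiluteAux.gamma_ne_zero_of_re_pos ?_
    simp only [Complex.sub_re, Complex.ofReal_re]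
    norm_num; linarith
  have hGab : Complex.Gamma (1 - (α:ℂ) * ((b:ℂ) - 1)) ≠ 0 := by
    refine DiluteAux.gamma_ne_zero_of_re_pos ?_
    have : ((1:ℂ) - (α:ℂ) * ((b:ℂ) - 1)) = (((1 - α * (b-1) : ℝ)):ℂ) := by push_cast; ring
    rw [this, Complex.ofReal_re]; linarith
  have hGabr : Complex.Gamma (1 - (α:ℂ) * ((b:ℂ) - r - 1)) ≠ 0 := by
    refine DiluteAux.gamma_ne_zero_of_re_pos ?_
    have : ((1:ℂ) - (α:ℂ) * ((b:ℂ) - r - 1)).re = 1 - α * (b - r.re - 1) := by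
      simp [Complex.sub_re, Complex.re_ofReal_mul, Complex.ofReal_re, Complex.one_re]
    rw [this]
    nlinarith
  have hlbr : (lam:ℂ) ^ ((b:ℂ) - 1) ≠ 0 := by
    intro h
    rw [Complex.cpow_eq_zero_iff] at h
    exact hlc h.1
  -- value of m
  have hmc : (m:ℂ) = (lam:ℂ) ^ ((b:ℂ) - 1) * Complex.Gamma (2 - (b:ℂ))
      / Complex.Gamma (1 - (α:ℂ) * ((b:ℂ) - 1)) := by
    have h1 : (m:ℂ) = ∫ x in Set.Ioi (0:ℝ), (x:ℂ) ^ (((α * (b-1) : ℝ)):ℂ) * (f x : ℂ) := by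
      rw [hm, DiluteAux.integral_ofReal'']
      refine MeasureTheory.setIntegral_congr_fun measurableSet_Ioi (fun x hx => ?_)
      rw [Complex.ofReal_mul, Complex.ofReal_cpow (le_of_lt hx)]
    have h2 := hmaster (((α * (b-1) : ℝ)):ℂ) (by simpa using hs0)
    rw [h1, h2]
    have e1 : (((α * (b-1) : ℝ)):ℂ) / (α:ℂ) = (b:ℂ) - 1 := by
      push_cast; field_simp
    rw [e1, show ((α * (b-1) : ℝ) : ℂ) = (α:ℂ) * ((b:ℂ) - 1) from by push_cast; ring,
      show (1:ℂ) - ((b:ℂ) - 1) = 2 - (b:ℂ) from by ring]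
  have hm0 : (m:ℂ) ≠ 0 := by
    rw [hmc]
    exact div_ne_zero (mul_ne_zero hlbr hG2b) hGab
  have hmr0 : m ≠ 0 := by
    intro h; rw [h] at hm0; exact hm0 (by norm_num)
  -- substitution x ↦ x^(-α)
  set S : ℂ := ((α * (b-1) : ℝ) : ℂ) - (α:ℂ) * r with hSdef
  have hSre : S.re < α := by
    have : S.re = α * (b-1) - α * r.re := by
      rw [hSdef]
      simp [Complex.sub_re, Complex.re_ofReal_mul, Complex.ofReal_re]
    rw [this]
    nlinarith
  have hsub := MeasureTheory.integral_comp_rpow_Ioi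
      (fun u : ℝ => (u:ℂ) ^ r * ((ftilde u : ℝ):ℂ)) (p := -α) (neg_ne_zero.mpr hα0.ne')
  rw [← hsub]
  have hpoint : ∀ x ∈ Set.Ioi (0:ℝ),
      (|(-α)| * x ^ (-α - 1)) •
        ((((x ^ (-α) : ℝ)):ℂ) ^ r * ((ftilde (x ^ (-α)) : ℝ):ℂ))
      = ((m:ℂ))⁻¹ * ((x:ℂ) ^ S * (f x : ℂ)) := by
    intro x hx'
    have hx : (0:ℝ) < x := hx'
    have hxa : (0:ℝ) < x ^ (-α) := Real.rpow_pos_of_pos hx _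
    have hxc : (x:ℂ) ≠ 0 := Complex.ofReal_ne_zero.mpr hx.ne'
    rw [hftilde _ hxa]
    rw [← Real.rpow_mul hx.le, show (-α) * (-(1/α)) = 1 from by field_simp, Real.rpow_one]
    rw [← Real.rpow_mul hx.le]
    rw [DiluteAux.ofReal_cpow_mul hx (-α) r, Complex.real_smul, abs_neg, abs_of_pos hα0]
    have real_eq : α * x ^ (-α - 1) * (f x / (α * m * x ^ ((-α) * (b + 1/α))))
        = m⁻¹ * (x ^ (α * (b-1)) * f x) := by
      rw [show (-α) * (b + 1/α) = -(α * b + 1) from by field_simp,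
        Real.rpow_neg hx.le]
      have hxp : (0:ℝ) < x ^ (α * b + 1) := Real.rpow_pos_of_pos hx _
      have hcomb : x ^ (-α - 1) * x ^ (α * b + 1) = x ^ (α * (b-1)) := by
        rw [← Real.rpow_add hx]; congr 1; ring
      field_simp
      linear_combination (f x) * hcomb
    calc ((α * x ^ (-α - 1) : ℝ):ℂ) *
          ((x:ℂ) ^ (((-α : ℝ):ℂ) * r) * ((f x / (α * m * x ^ ((-α) * (b + 1/α))) : ℝ):ℂ))
        = ((α * x ^ (-α - 1) * (f x / (α * m * x ^ ((-α) * (b + 1/α)))) : ℝ):ℂ)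
            * (x:ℂ) ^ (((-α : ℝ):ℂ) * r) := by push_cast; ring
      _ = ((m⁻¹ * (x ^ (α * (b-1)) * f x) : ℝ):ℂ) * (x:ℂ) ^ (((-α : ℝ):ℂ) * r) := by
            rw [real_eq]
      _ = ((m:ℂ))⁻¹ * ((x:ℂ) ^ S * (f x : ℂ)) := by
            rw [hSdef]
            push_cast [Complex.ofReal_cpow hx.le]
            rw [show ((x:ℂ) ^ ((α:ℂ) * ((b:ℂ) - 1)) : ℂ) = (x:ℂ) ^ ((α:ℂ) * ((b:ℂ) - 1))
              from rfl]
            rw [show (α:ℂ) * ((b:ℂ) - 1) - (α:ℂ) * r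
                = ((α:ℂ) * ((b:ℂ) - 1)) + (-(α:ℂ) * r) from by ring,
              Complex.cpow_add _ _ hxc]
            ring
  rw [MeasureTheory.setIntegral_congr_fun measurableSet_Ioi hpoint, integral_const_mul,
    hmaster S hSre]
  -- final algebra
  have eS1 : S / (α:ℂ) = (b:ℂ) - 1 - r := by
    rw [hSdef]; push_cast; field_simp
  rw [eS1, show (1:ℂ) - ((b:ℂ) - 1 - r) = 2 - (b:ℂ) + r from by ring,
    show (1:ℂ) - S = 1 - (α:ℂ) * ((b:ℂ) - r - 1) from by rw [hSdef]; push_cast; ring,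
    show ((b:ℂ) - 1 - r) = ((b:ℂ) - 1) + (-r) from by ring,
    Complex.cpow_add _ _ hlc, hmc]
  field_simp
end

section
/- In the product structure limit (Lemma on extended schemes, case ℓ=2): with notation as in the subexponentiality lemma, let (P_1,P_2) be the random vector with P((P_1,P_2)=(k_1,k_2)) = w_{k_1}^{(1)} w_{k_2}^{(2)} / o_n when k_1+k_2=n. Then for each fixed k ≥ 0, lim_{n→∞} P(P_2 = k) = p_1 · w_k^{(2)} ρ_o^k / W_2(ρ_o) and lim_{n→∞} P(P_1 = k) = p_2 · w_k^{(1)} ρ_o^k / W_1(ρ_o). -/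
open Filter Topology

/-- A nonnegative sequence `r` satisfies the subexponentiality condition with
parameter `ρ ∈ (0,∞)` (the radius of convergence of `∑ r_n z^n`). -/
def Subexponential (r : ℕ → ℝ) (ρ : ℝ) : Prop :=
  0 < ρ ∧ (∀ n, 0 ≤ r n) ∧ (∀ᶠ n in atTop, 0 < r n) ∧
    Summable (fun n => r n * ρ ^ n) ∧
    Tendsto (fun n => r n / r (n + 1)) atTop (𝓝 ρ) ∧
    Tendsto
      (fun n => (∑ ij ∈ Finset.HasAntidiagonal.antidiagonal n, r ij.1 * r ij.2) / r n)
      atTop (𝓝 (2 * ∑' n, r n * ρ ^ n))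

/-- limit law of the product structure `(P_1, P_2)` with
`P((P_1,P_2) = (k_1,k_2)) = w^{(1)}_{k_1} w^{(2)}_{k_2} / o_n` for `k_1 + k_2 = n`.
For each fixed `k`, `P(P_2 = k) = w^{(1)}_{n-k} w^{(2)}_k / o_n → p_1 · w^{(2)}_k ρ^k / W_2(ρ)`
and symmetrically `P(P_1 = k) → p_2 · w^{(1)}_k ρ^k / W_1(ρ)`. -/
theorem product_structure_limit
    (r : ℕ → ℝ) (ρ : ℝ) (hr : Subexponential r ρ)
    (w₁ w₂ : ℕ → ℝ) (hw₁ : ∀ n, 0 ≤ w₁ n) (hw₂ : ∀ n, 0 ≤ w₂ n)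
    (L₁ L₂ : ℝ) (hL₁0 : 0 ≤ L₁) (hL₂0 : 0 ≤ L₂)
    (hL₁ : Tendsto (fun n => w₁ n / r n) atTop (𝓝 L₁))
    (hL₂ : Tendsto (fun n => w₂ n / r n) atTop (𝓝 L₂))
    (hpos : 0 < L₁ ∨ 0 < L₂)
    (o : ℕ → ℝ) (ho : ∀ n, o n = ∑ ij ∈ Finset.HasAntidiagonal.antidiagonal n, w₁ ij.1 * w₂ ij.2)
    (p₁ p₂ : ℝ) (hp : p₁ + p₂ = 1)
    (hp₁ : Tendsto
      (fun n => w₁ n * (∑' k, o k * ρ ^ k) / (o n * ∑' k, w₁ k * ρ ^ k))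
      atTop (𝓝 p₁))
    (hp₂ : Tendsto
      (fun n => w₂ n * (∑' k, o k * ρ ^ k) / (o n * ∑' k, w₂ k * ρ ^ k))
      atTop (𝓝 p₂)) :
    ∀ k : ℕ,
      Tendsto (fun n => w₁ (n - k) * w₂ k / o n) atTop
        (𝓝 (p₁ * (w₂ k * ρ ^ k / ∑' j, w₂ j * ρ ^ j))) ∧
      Tendsto (fun n => w₁ k * w₂ (n - k) / o n) atTop
        (𝓝 (p₂ * (w₁ k * ρ ^ k / ∑' j, w₁ j * ρ ^ j))) := by
  obtain ⟨hρ, hr0, hrpos, hrsum, hratio, -⟩ := hr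
  set O := ∑' k, o k * ρ ^ k with hOdef
  set W₁ := ∑' k, w₁ k * ρ ^ k with hW₁def
  set W₂ := ∑' k, w₂ k * ρ ^ k with hW₂def
  -- summability of weighted series
  have hsum : ∀ (w : ℕ → ℝ) (L : ℝ), 0 ≤ L → (∀ n, 0 ≤ w n) →
      Tendsto (fun n => w n / r n) atTop (𝓝 L) →
      Summable (fun n => w n * ρ ^ n) := by
    intro w L hL0 hw hL
    apply summable_of_isBigO_nat hrsum
    apply Asymptotics.IsBigO.of_bound (L + 1)
    filter_upwards [hrpos, hL.eventually (eventually_lt_nhds (lt_add_one L))] with n hrn hb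
    have hwle : w n ≤ (L + 1) * r n := by
      have := (div_le_iff₀ hrn).mp hb.le
      linarith
    have h1 : 0 ≤ ρ ^ n := by positivity
    rw [Real.norm_of_nonneg (mul_nonneg (hw n) h1), Real.norm_of_nonneg (mul_nonneg hrn.le h1)]
    calc w n * ρ ^ n ≤ ((L + 1) * r n) * ρ ^ n := by nlinarith [hw n]
      _ = (L + 1) * (r n * ρ ^ n) := by ring
  have hsum₁ := hsum w₁ L₁ hL₁0 hw₁ hL₁
  have hsum₂ := hsum w₂ L₂ hL₂0 hw₂ hL₂
  -- Cauchy product : O = W₁ * W₂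
  have hnorm₁ : Summable fun n => ‖w₁ n * ρ ^ n‖ := by
    refine hsum₁.congr fun n => ?_
    rw [Real.norm_of_nonneg (mul_nonneg (hw₁ n) (pow_pos hρ n).le)]
  have hnorm₂ : Summable fun n => ‖w₂ n * ρ ^ n‖ := by
    refine hsum₂.congr fun n => ?_
    rw [Real.norm_of_nonneg (mul_nonneg (hw₂ n) (pow_pos hρ n).le)]
  have hCauchy : O = W₁ * W₂ := by
    rw [hW₁def, hW₂def,
      tsum_mul_tsum_eq_tsum_sum_antidiagonal_of_summable_norm hnorm₁ hnorm₂, hOdef]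
    congr 1
    funext n
    rw [ho, Finset.sum_mul]
    refine Finset.sum_congr rfl fun ij hij => ?_
    have hij' : ij.1 + ij.2 = n := Finset.HasAntidiagonal.mem_antidiagonal.mp hij
    rw [← hij', pow_add]; ring
  -- degenerate case is contradictory
  have key0 : ¬ (∀ n, o n = 0) := by
    intro h0
    have hz : Tendsto (fun _ : ℕ => (0 : ℝ)) atTop (𝓝 0) := tendsto_const_nhds
    have hp₁0 : p₁ = 0 := tendsto_nhds_unique hp₁ (by simpa [h0] using hz)
    have hp₂0 : p₂ = 0 := tendsto_nhds_unique hp₂ (by simpa [h0] using hz)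
    rw [hp₁0, hp₂0] at hp; norm_num at hp
  have hWpos : ∀ (w : ℕ → ℝ), (∀ n, 0 ≤ w n) → Summable (fun n => w n * ρ ^ n) →
      (∑' k, w k * ρ ^ k) = 0 → ∀ n, w n = 0 := by
    intro w hw hsw h0 n
    by_contra hne
    have hwn : 0 < w n := lt_of_le_of_ne (hw n) (Ne.symm hne)
    have : 0 < ∑' k, w k * ρ ^ k :=
      Summable.tsum_pos hsw (fun i => mul_nonneg (hw i) (pow_pos hρ i).le) n
        (mul_pos hwn (pow_pos hρ n))
    exact absurd h0 this.ne'
  have hW₁pos : 0 < W₁ := by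
    rcases (tsum_nonneg fun n => mul_nonneg (hw₁ n) (pow_pos hρ n).le : (0:ℝ) ≤ W₁).lt_or_eq with h | h
    · exact h
    · exfalso; apply key0; intro n
      rw [ho]
      refine Finset.sum_eq_zero fun ij _ => ?_
      rw [hWpos w₁ hw₁ hsum₁ h.symm ij.1, zero_mul]
  have hW₂pos : 0 < W₂ := by
    rcases (tsum_nonneg fun n => mul_nonneg (hw₂ n) (pow_pos hρ n).le : (0:ℝ) ≤ W₂).lt_or_eq with h | h
    · exact h
    · exfalso; apply key0; intro n
      rw [ho]
      refine Finset.sum_eq_zero fun ij _ => ?_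
      rw [hWpos w₂ hw₂ hsum₂ h.symm ij.2, mul_zero]
  have hOpos : 0 < O := hCauchy ▸ mul_pos hW₁pos hW₂pos
  -- ratio limits
  have hpow : ∀ k : ℕ, Tendsto (fun n => r n / r (n + k)) atTop (𝓝 (ρ ^ k)) := by
    intro k
    induction k with
    | zero =>
      simp only [Nat.add_zero, pow_zero]
      refine Tendsto.congr' ?_ tendsto_const_nhds
      filter_upwards [hrpos] with n hn
      rw [div_self hn.ne']
    | succ k ih =>
      have h2 : Tendsto (fun n => r (n + k) / r (n + k + 1)) atTop (𝓝 ρ) :=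
        hratio.comp (tendsto_add_atTop_nat k)
      have hmul := ih.mul h2
      rw [pow_succ]
      refine Tendsto.congr' ?_ hmul
      filter_upwards [(tendsto_add_atTop_nat k).eventually hrpos] with n hn
      have e : n + (k + 1) = n + k + 1 := by omega
      rw [e]
      rcases eq_or_ne (r (n + k + 1)) 0 with h | h
      · simp [h]
      · have hne := hn.ne'
        field_simp
        try ring
  have hpow' : ∀ k : ℕ, Tendsto (fun n => r (n - k) / r n) atTop (𝓝 (ρ ^ k)) := by
    intro k
    refine Tendsto.congr' ?_ ((hpow k).comp (tendsto_sub_atTop_nat k))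
    filter_upwards [eventually_ge_atTop k] with n hn
    simp only [Function.comp_apply]
    rw [Nat.sub_add_cancel hn]
  -- limit of r n / o n
  have key : ∀ (w : ℕ → ℝ) (L W p : ℝ), 0 < L → 0 < W →
      Tendsto (fun n => w n / r n) atTop (𝓝 L) →
      Tendsto (fun n => w n * O / (o n * W)) atTop (𝓝 p) →
      Tendsto (fun n => r n / o n) atTop (𝓝 (p * W / O / L)) := by
    intro w L W p hL hW hwr hptend
    have h1 : Tendsto (fun n => w n * O / (o n * W) * W / O / (w n / r n)) atTop
        (𝓝 (p * W / O / L)) := ((hptend.mul_const W).div_const O).div hwr hL.ne'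
    refine Tendsto.congr' ?_ h1
    filter_upwards [hrpos, hwr.eventually (eventually_gt_nhds hL)] with n hrn hq
    have hwn : w n ≠ 0 := by
      intro h; rw [h, zero_div] at hq; exact lt_irrefl 0 hq
    rcases eq_or_ne (o n) 0 with h | h
    · simp [h]
    · field_simp
      try ring
  obtain ⟨ℓ, hℓ⟩ : ∃ ℓ, Tendsto (fun n => r n / o n) atTop (𝓝 ℓ) := by
    rcases hpos with h | h
    · exact ⟨_, key w₁ L₁ W₁ p₁ h hW₁pos hL₁ hp₁⟩
    · exact ⟨_, key w₂ L₂ W₂ p₂ h hW₂pos hL₂ hp₂⟩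
  -- identities for p₁, p₂
  have hpid : ∀ (w : ℕ → ℝ) (L W p : ℝ), 0 < W →
      Tendsto (fun n => w n / r n) atTop (𝓝 L) →
      Tendsto (fun n => w n * O / (o n * W)) atTop (𝓝 p) →
      p = L * ℓ * O / W := by
    intro w L W p hW hwr hptend
    have h1 : Tendsto (fun n => (w n / r n) * (r n / o n) * O / W) atTop
        (𝓝 (L * ℓ * O / W)) := ((hwr.mul hℓ).mul_const O).div_const W
    refine tendsto_nhds_unique hptend (Tendsto.congr' ?_ h1)
    filter_upwards [hrpos] with n hrn
    rcases eq_or_ne (o n) 0 with h | h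
    · simp [h]
    · field_simp
  have hp₁id : p₁ = L₁ * ℓ * O / W₁ := hpid w₁ L₁ W₁ p₁ hW₁pos hL₁ hp₁
  have hp₂id : p₂ = L₂ * ℓ * O / W₂ := hpid w₂ L₂ W₂ p₂ hW₂pos hL₂ hp₂
  -- main conclusion
  obtain ⟨N, hN⟩ := eventually_atTop.mp hrpos
  intro k
  constructor
  · have hT : Tendsto (fun n => (w₁ (n - k) / r (n - k)) * (r (n - k) / r n) * (r n / o n) * w₂ k)
        atTop (𝓝 (L₁ * ρ ^ k * ℓ * w₂ k)) :=
      (((hL₁.comp (tendsto_sub_atTop_nat k)).mul (hpow' k)).mul hℓ).mul_const _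
    have hval : p₁ * (w₂ k * ρ ^ k / W₂) = L₁ * ρ ^ k * ℓ * w₂ k := by
      rw [hp₁id, hCauchy]
      field_simp
      try ring
    rw [hval]
    refine Tendsto.congr' ?_ hT
    filter_upwards [eventually_ge_atTop (N + k)] with n hn
    have h1 : r (n - k) ≠ 0 := (hN _ (by omega)).ne'
    have h2 : r n ≠ 0 := (hN _ (by omega)).ne'
    rcases eq_or_ne (o n) 0 with h | h
    · simp [h]
    · field_simp
      try ring
  · have hT : Tendsto (fun n => (w₂ (n - k) / r (n - k)) * (r (n - k) / r n) * (r n / o n) * w₁ k)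
        atTop (𝓝 (L₂ * ρ ^ k * ℓ * w₁ k)) :=
      (((hL₂.comp (tendsto_sub_atTop_nat k)).mul (hpow' k)).mul hℓ).mul_const _
    have hval : p₂ * (w₁ k * ρ ^ k / W₁) = L₂ * ρ ^ k * ℓ * w₁ k := by
      rw [hp₂id, hCauchy]
      field_simp
      try ring
    rw [hval]
    refine Tendsto.congr' ?_ hT
    filter_upwards [eventually_ge_atTop (N + k)] with n hn
    have h1 : r (n - k) ≠ 0 := (hN _ (by omega)).ne'
    have h2 : r n ≠ 0 := (hN _ (by omega)).ne'
    rcases eq_or_ne (o n) 0 with h | h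
    · simp [h]
    · field_simp
      try ring
end

section
/- Convergent case local structure: Suppose 0 < V'(W(ρ_w)) < ∞ and assume P(S_N = n) ~ E[N]·P(X = n) and P(X = n−y) ~ P(X = n) as n → ∞ for each fixed y ≥ 0, where X has PGF W(ρ_w z)/W(ρ_w), N has PGF V(W(ρ_w)z)/V(W(ρ_w)), X_1, X_2, … are i.i.d. copies of X independent of N, and S_N = ∑_{i=1}^N X_i. Then for all integers 1 ≤ j ≤ m and x_1,…,x_{m−1} ≥ 0 with y = ∑ x_i, the probability that the component-size vector of the Gibbs partition equals (x_1,…,x_{j−1}, n−y, x_j,…,x_{m−1}) converges, as n → ∞, to (P(N=m)/E[N]) · ∏_{i=1}^{m−1} P(X = x_i). -/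
open Filter Topology

/-- `P(X_1 + ⋯ + X_ℓ = n)` for i.i.d. `X_i` with distribution `p` on `ℕ`. -/
noncomputable def iidSumProb (p : ℕ → ℝ) (ℓ n : ℕ) : ℝ :=
  ∑ f ∈ Finset.Nat.antidiagonalTuple ℓ n, ∏ i, p (f i)

/-- **convergent case, local structure**: let `pX` be the law of `X`
(PGF `W(ρ_w z)/W(ρ_w)`) and `pN` the law of `N` (PGF `V(W(ρ_w)z)/V(W(ρ_w))`), with
`0 < E[N] < ∞` (i.e. `0 < V'(W(ρ_w)) < ∞`).  Assume `X` is locally subexponential: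
`P(X = n - y) ∼ P(X = n)` for each fixed `y` and `P(X_1+X_2=n) ∼ 2 P(X=n)`, and assume
`P(S_N = n) ∼ E[N] P(X = n)`.  Under Kolchin's representation the probability that the
component-size vector equals `(x_1,…,x_{j-1}, n-y, x_j,…,x_{m-1})` — encoded by the
lists `a = (x_1,…,x_{j-1})` and `b = (x_j,…,x_{m-1})`, `m = |a|+|b|+1`, `y = Σa + Σb` —
converges to `(P(N = m)/E[N]) ∏_{i=1}^{m-1} P(X = x_i)`. -/
theorem convergent_case_local_structure
    (pX pN : ℕ → ℝ)
    (hpX0 : ∀ k, 0 ≤ pX k) (hpX1 : ∑' k, pX k = 1)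
    (hpN0 : ∀ k, 0 ≤ pN k) (hpN1 : ∑' k, pN k = 1)
    (hENsum : Summable (fun ℓ : ℕ => (ℓ : ℝ) * pN ℓ))
    (hENpos : 0 < ∑' ℓ : ℕ, (ℓ : ℝ) * pN ℓ)
    (hXpos : ∀ᶠ n in atTop, 0 < pX n)
    (hXloc : ∀ y : ℕ, Tendsto (fun n => pX (n - y) / pX n) atTop (𝓝 1))
    (hXsubexp : Tendsto (fun n => iidSumProb pX 2 n / pX n) atTop (𝓝 2))
    (hSN : Tendsto
      (fun n => (∑' ℓ, pN ℓ * iidSumProb pX ℓ n) / ((∑' ℓ : ℕ, (ℓ : ℝ) * pN ℓ) * pX n))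
      atTop (𝓝 1)) :
    ∀ a b : List ℕ,
      Tendsto
        (fun n =>
          pN (a.length + b.length + 1) *
            ((a.map pX).prod * pX (n - (a.sum + b.sum)) * (b.map pX).prod) /
            ∑' ℓ, pN ℓ * iidSumProb pX ℓ n)
        atTop
        (𝓝 (pN (a.length + b.length + 1) / (∑' ℓ : ℕ, (ℓ : ℝ) * pN ℓ) *
          ((a ++ b).map pX).prod)) := by
  intro a b
  set E := ∑' ℓ : ℕ, (ℓ : ℝ) * pN ℓ with hE
  have hEne : E ≠ 0 := ne_of_gt hENpos
  set m := a.length + b.length + 1 with hm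
  set y := a.sum + b.sum with hy
  set A := (a.map pX).prod with hA
  set B := (b.map pX).prod with hB
  have hAB : ((a ++ b).map pX).prod = A * B := by simp [hA, hB]
  have hD : Tendsto (fun n => (E * pX n) / (∑' ℓ, pN ℓ * iidSumProb pX ℓ n)) atTop (𝓝 1) := by
    simpa using (hSN.inv₀ one_ne_zero)
  have hmain : Tendsto
      (fun n => (pN m / E * (A * B)) *
        ((pX (n - y) / pX n) * ((E * pX n) / (∑' ℓ, pN ℓ * iidSumProb pX ℓ n))))
      atTop (𝓝 (pN m / E * (A * B))) := by
    have h1 := (hXloc y).mul hD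
    have h2 := (tendsto_const_nhds (x := pN m / E * (A * B)) (f := atTop)).mul h1
    simpa using h2
  have hDpos : ∀ᶠ n in atTop, 0 < ∑' ℓ, pN ℓ * iidSumProb pX ℓ n := by
    have h := hSN.eventually (eventually_gt_nhds (show (0:ℝ) < 1 by norm_num))
    filter_upwards [h, hXpos] with n hn hx
    have hpos : 0 < E * pX n := mul_pos hENpos hx
    have := mul_pos hn hpos
    have heq : (∑' ℓ, pN ℓ * iidSumProb pX ℓ n) / (E * pX n) * (E * pX n)
        = ∑' ℓ, pN ℓ * iidSumProb pX ℓ n := div_mul_cancel₀ _ (ne_of_gt hpos)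
    linarith [heq ▸ this]
  rw [hAB]
  refine hmain.congr' ?_
  filter_upwards [hXpos, hDpos] with n hx hd
  have hxne := ne_of_gt hx
  have hdne := ne_of_gt hd
  field_simp
end

section
/- In the convergent case, the number of components converges in distribution to the size-biased variable: under the hypotheses of the convergent-case theorem (in particular P(S_N = n) ~ E[N]·P(X=n) and the local subexponential property of X), N_n →_d N̂ as n → ∞, where N̂ has probability generating function E[z^{N̂}] = z·V'(W(ρ_w)z)/V'(W(ρ_w)). -/
open Filter Topology

lemma iidSumProb_zero (p : ℕ → ℝ) (n : ℕ) :
    iidSumProb p 0 n = if n = 0 then 1 else 0 := by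
  cases n with
  | zero => simp [iidSumProb, Finset.Nat.antidiagonalTuple_zero_zero]
  | succ m => simp [iidSumProb, Finset.Nat.antidiagonalTuple_zero_succ]

lemma iidSumProb_one (p : ℕ → ℝ) (n : ℕ) : iidSumProb p 1 n = p n := by
  simp [iidSumProb, Finset.Nat.antidiagonalTuple_one]

lemma iidSumProb_succ (p : ℕ → ℝ) (ℓ n : ℕ) :
    iidSumProb p (ℓ+1) n = ∑ k ∈ Finset.range (n+1), p k * iidSumProb p ℓ (n - k) := by
  unfold iidSumProb
  have h2 : ∑ k ∈ Finset.range (n+1), p k * ∑ f ∈ Finset.Nat.antidiagonalTuple ℓ (n-k), ∏ i, p (f i)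
      = ∑ x ∈ (Finset.range (n+1)).sigma (fun k => Finset.Nat.antidiagonalTuple ℓ (n-k)),
          p x.1 * ∏ i, p (x.2 i) := by
    rw [Finset.sum_sigma]
    exact Finset.sum_congr rfl fun k _ => Finset.mul_sum ..
  rw [h2]
  refine Finset.sum_nbij' (fun f => ⟨f 0, Fin.tail f⟩) (fun x => Fin.cons x.1 x.2) ?_ ?_ ?_ ?_ ?_
  · intro f hf
    rw [Finset.Nat.mem_antidiagonalTuple, Fin.sum_univ_succ] at hf
    refine Finset.mem_sigma.2 ⟨Finset.mem_range.2 ?_, Finset.Nat.mem_antidiagonalTuple.2 ?_⟩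
    · show f 0 < n + 1
      generalize (∑ i : Fin ℓ, f i.succ) = S at hf; omega
    · show ∑ i, Fin.tail f i = n - f 0
      simp only [Fin.tail]
      generalize (∑ i : Fin ℓ, f i.succ) = S at hf ⊢; omega
  · intro x hx
    rw [Finset.mem_sigma, Finset.mem_range, Finset.Nat.mem_antidiagonalTuple] at hx
    show (Fin.cons x.1 x.2 : Fin (ℓ+1) → ℕ) ∈ _
    rw [Finset.Nat.mem_antidiagonalTuple, Fin.sum_univ_succ]
    simp only [Fin.cons_zero, Fin.cons_succ]
    obtain ⟨h1, h2⟩ := hx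
    generalize (∑ i : Fin ℓ, x.2 i) = S at h2 ⊢; omega
  · intro f _; exact Fin.cons_self_tail f
  · intro x _
    simp [Fin.tail_cons]
  · intro f _
    show ∏ i, p (f i) = p (f 0) * ∏ i, p (Fin.tail f i)
    simp [Fin.prod_univ_succ, Fin.tail]

lemma iidSumProb_nonneg (p : ℕ → ℝ) (hp0 : ∀ k, 0 ≤ p k) (ℓ n : ℕ) :
    0 ≤ iidSumProb p ℓ n :=
  Finset.sum_nonneg fun f _ => Finset.prod_nonneg fun i _ => hp0 (f i)

lemma iidSumProb_hasSum (p : ℕ → ℝ) (hp0 : ∀ k, 0 ≤ p k) (hp1 : HasSum p 1) (ℓ : ℕ) :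
    HasSum (iidSumProb p ℓ) 1 := by
  induction ℓ with
  | zero =>
    have : iidSumProb p 0 = fun n => if n = 0 then (1:ℝ) else 0 := funext (iidSumProb_zero p)
    rw [this]
    simpa using hasSum_ite_eq (0:ℕ) (1:ℝ)
  | succ ℓ ih =>
    have hsp : Summable p := hp1.summable
    have hsA : Summable (iidSumProb p ℓ) := ih.summable
    have hnorm : Summable fun n => ‖p n‖ := by
      simpa [Real.norm_of_nonneg, hp0] using
        hsp.congr (fun n => (Real.norm_of_nonneg (hp0 n)).symm)
    have hnormA : Summable fun n => ‖iidSumProb p ℓ n‖ := by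
      exact hsA.congr (fun n =>
        (Real.norm_of_nonneg (iidSumProb_nonneg p hp0 ℓ n)).symm)
    have key := tsum_mul_tsum_eq_tsum_sum_antidiagonal_of_summable_norm hnorm hnormA
    have hsum2 : Summable fun n => ∑ kl ∈ Finset.HasAntidiagonal.antidiagonal n, p kl.1 * iidSumProb p ℓ kl.2 :=
      (summable_norm_sum_mul_antidiagonal_of_summable_norm hnorm hnormA).of_norm
    have heq : (fun n => ∑ kl ∈ Finset.HasAntidiagonal.antidiagonal n, p kl.1 * iidSumProb p ℓ kl.2)
        = iidSumProb p (ℓ+1) := by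
      funext n
      rw [iidSumProb_succ, Finset.Nat.sum_antidiagonal_eq_sum_range_succ
        (fun k l => p k * iidSumProb p ℓ l)]
    rw [heq] at key hsum2
    have : ∑' n, iidSumProb p (ℓ+1) n = 1 := by
      rw [← key, hp1.tsum_eq, ih.tsum_eq, one_mul]
    exact this ▸ hsum2.hasSum
-- helper: three-way split of a range sum
lemma split3 (g : ℕ → ℝ) (n M : ℕ) (h : 2*M+2 ≤ n) :
    ∑ k ∈ Finset.range (n+1), g k
      = ∑ k ∈ Finset.range (M+1), g k + ∑ k ∈ Finset.Ico (M+1) (n-M), g k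
        + ∑ j ∈ Finset.range (M+1), g (n-j) := by
  have e1 : ∑ k ∈ Finset.Ico 0 (M+1), g k + ∑ k ∈ Finset.Ico (M+1) (n+1), g k
      = ∑ k ∈ Finset.Ico 0 (n+1), g k :=
    Finset.sum_Ico_consecutive g (by omega) (by omega)
  have e2 : ∑ k ∈ Finset.Ico (M+1) (n-M), g k + ∑ k ∈ Finset.Ico (n-M) (n+1), g k
      = ∑ k ∈ Finset.Ico (M+1) (n+1), g k :=
    Finset.sum_Ico_consecutive g (by omega) (by omega)
  have e3 : ∑ k ∈ Finset.Ico (n-M) (n+1), g k = ∑ j ∈ Finset.range (M+1), g (n-j) := by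
    refine Finset.sum_nbij' (fun k => n - k) (fun j => n - j) ?_ ?_ ?_ ?_ ?_
    · intro a ha; rw [Finset.mem_Ico] at ha
      show n - a ∈ Finset.range (M+1); rw [Finset.mem_range]; omega
    · intro a ha; rw [Finset.mem_range] at ha
      show n - a ∈ Finset.Ico (n-M) (n+1); rw [Finset.mem_Ico]; omega
    · intro a ha; rw [Finset.mem_Ico] at ha; show n - (n - a) = a; omega
    · intro a ha; rw [Finset.mem_range] at ha; show n - (n - a) = a; omega
    · intro a ha; rw [Finset.mem_Ico] at ha; show g a = g (n - (n - a)); congr 1; omega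
  calc ∑ k ∈ Finset.range (n+1), g k = ∑ k ∈ Finset.Ico 0 (n+1), g k := by
        rw [Finset.range_eq_Ico]
    _ = ∑ k ∈ Finset.Ico 0 (M+1), g k + ∑ k ∈ Finset.Ico (M+1) (n+1), g k := e1.symm
    _ = ∑ k ∈ Finset.range (M+1), g k + (∑ k ∈ Finset.Ico (M+1) (n-M), g k
          + ∑ k ∈ Finset.Ico (n-M) (n+1), g k) := by rw [Finset.range_eq_Ico, e2]
    _ = _ := by rw [e3]; ring

lemma term_tendsto (p : ℕ → ℝ) (hpos : ∀ᶠ n in atTop, 0 < p n)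
    (hloc : ∀ y : ℕ, Tendsto (fun n => p (n - y) / p n) atTop (𝓝 1))
    {ℓ : ℕ} {c : ℝ}
    (ih : Tendsto (fun n => iidSumProb p ℓ n / p n) atTop (𝓝 c)) (k : ℕ) :
    Tendsto (fun n => iidSumProb p ℓ (n - k) / p n) atTop (𝓝 c) := by
  have h1 : Tendsto (fun n => iidSumProb p ℓ (n-k) / p (n-k)) atTop (𝓝 c) :=
    ih.comp (tendsto_sub_atTop_nat k)
  have h3 := h1.mul (hloc k)
  rw [mul_one] at h3
  refine h3.congr' ?_
  filter_upwards [(tendsto_sub_atTop_nat k).eventually hpos] with n hn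
  rw [div_mul_div_comm, mul_comm (iidSumProb p ℓ (n-k)) (p (n-k)),
    mul_div_mul_left _ _ hn.ne']

lemma key_tendsto (p : ℕ → ℝ) (hp0 : ∀ k, 0 ≤ p k) (hp1 : HasSum p 1)
    (hpos : ∀ᶠ n in atTop, 0 < p n)
    (hloc : ∀ y : ℕ, Tendsto (fun n => p (n - y) / p n) atTop (𝓝 1))
    (hsub : Tendsto (fun n => iidSumProb p 2 n / p n) atTop (𝓝 2)) (ℓ : ℕ) :
    Tendsto (fun n => iidSumProb p ℓ n / p n) atTop (𝓝 (ℓ : ℝ)) := by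
  induction ℓ with
  | zero =>
    have : Tendsto (fun _ : ℕ => (0:ℝ)) atTop (𝓝 ((0:ℕ) : ℝ)) := by
      simpa using tendsto_const_nhds
    refine this.congr' ?_
    filter_upwards [eventually_ge_atTop 1] with n hn
    rw [iidSumProb_zero, if_neg (by omega)]
    simp
  | succ ℓ ih =>
    set c : ℝ := (ℓ : ℝ) with hc
    have hc0 : 0 ≤ c := Nat.cast_nonneg ℓ
    -- eventual domination : iidSumProb p ℓ m ≤ (c+1) * p m for large m
    have hdom : ∀ᶠ m in atTop, iidSumProb p ℓ m ≤ (c + 1) * p m := by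
      have h1 : ∀ᶠ m in atTop, iidSumProb p ℓ m / p m ≤ c + 1 :=
        ih.eventually (eventually_le_nhds (by linarith))
      filter_upwards [h1, hpos] with m hm hpm
      calc iidSumProb p ℓ m = (iidSumProb p ℓ m / p m) * p m := by
            field_simp
        _ ≤ (c + 1) * p m := by
            exact mul_le_mul_of_nonneg_right hm hpm.le
    obtain ⟨n0, hn0⟩ := eventually_atTop.1 hdom
    -- limits of partial sums
    have hFlim : Tendsto (fun M => ∑ k ∈ Finset.range (M+1), p k) atTop (𝓝 1) :=
      hp1.tendsto_sum_nat.comp (tendsto_add_atTop_nat 1)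
    have hAsum : HasSum (iidSumProb p ℓ) 1 := iidSumProb_hasSum p hp0 hp1 ℓ
    have hGlim : Tendsto (fun M => ∑ j ∈ Finset.range (M+1), iidSumProb p ℓ j) atTop (𝓝 1) :=
      hAsum.tendsto_sum_nat.comp (tendsto_add_atTop_nat 1)
    rw [Metric.tendsto_atTop]
    intro ε hε
    set δ : ℝ := ε / (5 * c + 8) with hδdef
    have hδpos : 0 < δ := div_pos hε (by linarith)
    have hδε : δ * (5 * c + 8) = ε := by
      rw [hδdef]; field_simp
    -- choose M
    have hM1 : ∀ᶠ M in atTop, 1 - δ ≤ ∑ k ∈ Finset.range (M+1), p k :=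
      hFlim.eventually (eventually_ge_nhds (by linarith))
    have hM2 : ∀ᶠ M in atTop, 1 - δ ≤ ∑ j ∈ Finset.range (M+1), iidSumProb p ℓ j :=
      hGlim.eventually (eventually_ge_nhds (by linarith))
    obtain ⟨M, hMF, hMG, hMn0⟩ := (hM1.and (hM2.and (eventually_ge_atTop n0))).exists
    set F : ℝ := ∑ k ∈ Finset.range (M+1), p k with hF
    set G : ℝ := ∑ j ∈ Finset.range (M+1), iidSumProb p ℓ j with hG
    have hFle : F ≤ 1 := by
      simpa using sum_le_hasSum (Finset.range (M+1)) (fun i _ => hp0 i) hp1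
    have hGle : G ≤ 1 := by
      simpa using sum_le_hasSum (Finset.range (M+1))
        (fun i _ => iidSumProb_nonneg p hp0 ℓ i) hAsum
    -- the three-part functions
    set Lf : ℕ → ℝ := fun n => ∑ k ∈ Finset.range (M+1), p k * (iidSumProb p ℓ (n-k) / p n)
    set Rf : ℕ → ℝ := fun n => ∑ j ∈ Finset.range (M+1), iidSumProb p ℓ j * (p (n-j) / p n)
    set Mf : ℕ → ℝ := fun n => (∑ k ∈ Finset.Ico (M+1) (n-M), p k * iidSumProb p ℓ (n-k)) / p n
    set L1 : ℕ → ℝ := fun n => ∑ k ∈ Finset.range (M+1), p k * (p (n-k) / p n)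
    set M1 : ℕ → ℝ := fun n => (∑ k ∈ Finset.Ico (M+1) (n-M), p k * p (n-k)) / p n
    -- limits for fixed M
    have TL : Tendsto Lf atTop (𝓝 (F * c)) := by
      rw [hF, Finset.sum_mul]
      exact tendsto_finset_sum _ fun k _ =>
        (term_tendsto p hpos hloc ih k).const_mul (p k)
    have TR : Tendsto Rf atTop (𝓝 G) := by
      have : Tendsto Rf atTop (𝓝 (∑ j ∈ Finset.range (M+1), iidSumProb p ℓ j * 1)) :=
        tendsto_finset_sum _ fun j _ => (hloc j).const_mul _
      simpa using this
    have TL1 : Tendsto L1 atTop (𝓝 F) := by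
      have : Tendsto L1 atTop (𝓝 (∑ k ∈ Finset.range (M+1), p k * 1)) :=
        tendsto_finset_sum _ fun k _ => (hloc k).const_mul _
      simpa using this
    -- decomposition identity
    have hdec : ∀ m : ℕ, ∀ n : ℕ, 2*M+2 ≤ n →
        iidSumProb p (m+1) n / p n
          = (∑ k ∈ Finset.range (M+1), p k * (iidSumProb p m (n-k) / p n))
            + (∑ k ∈ Finset.Ico (M+1) (n-M), p k * iidSumProb p m (n-k)) / p n
            + ∑ j ∈ Finset.range (M+1), iidSumProb p m j * (p (n-j) / p n) := by
      intro m n hn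
      rw [iidSumProb_succ, split3 (fun k => p k * iidSumProb p m (n-k)) n M hn]
      have h3 : ∑ j ∈ Finset.range (M+1), p (n-j) * iidSumProb p m (n-(n-j))
          = ∑ j ∈ Finset.range (M+1), iidSumProb p m j * p (n-j) := by
        refine Finset.sum_congr rfl fun j hj => ?_
        rw [Finset.mem_range] at hj
        rw [show n - (n - j) = j by omega, mul_comm]
      rw [add_div, add_div, h3]
      congr 1
      · congr 1
        rw [Finset.sum_div]
        exact Finset.sum_congr rfl fun k _ => mul_div_assoc _ _ _
      · rw [Finset.sum_div]
        exact Finset.sum_congr rfl fun j _ => mul_div_assoc _ _ _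
    -- eventual bounds
    have EL : ∀ᶠ n in atTop, |Lf n - F * c| < δ := by
      filter_upwards [Metric.tendsto_nhds.1 TL δ hδpos] with n hn
      rwa [Real.dist_eq] at hn
    have ER : ∀ᶠ n in atTop, |Rf n - G| < δ := by
      filter_upwards [Metric.tendsto_nhds.1 TR δ hδpos] with n hn
      rwa [Real.dist_eq] at hn
    have EL1 : ∀ᶠ n in atTop, |L1 n - F| < δ := by
      filter_upwards [Metric.tendsto_nhds.1 TL1 δ hδpos] with n hn
      rwa [Real.dist_eq] at hn
    have ER1 : ∀ᶠ n in atTop, |(∑ j ∈ Finset.range (M+1), p j * (p (n-j) / p n)) - F| < δ := by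
      have T : Tendsto (fun n => ∑ j ∈ Finset.range (M+1), p j * (p (n-j) / p n)) atTop (𝓝 F) := by
        have : Tendsto (fun n => ∑ j ∈ Finset.range (M+1), p j * (p (n-j) / p n)) atTop
            (𝓝 (∑ k ∈ Finset.range (M+1), p k * 1)) :=
          tendsto_finset_sum _ fun k _ => (hloc k).const_mul _
        simpa using this
      filter_upwards [Metric.tendsto_nhds.1 T δ hδpos] with n hn
      rwa [Real.dist_eq] at hn
    have Esub : ∀ᶠ n in atTop, |iidSumProb p 2 n / p n - 2| < δ := by
      filter_upwards [Metric.tendsto_nhds.1 hsub δ hδpos] with n hn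
      rwa [Real.dist_eq] at hn
    -- middle bound for the 2-fold sum
    have EM1 : ∀ᶠ n in atTop, M1 n ≤ 2 - 2*F + 3*δ := by
      filter_upwards [EL1, ER1, Esub, eventually_ge_atTop (2*M+2)] with n h1 h2 h3 h4
      have hd := hdec 1 n h4
      simp only [iidSumProb_one] at hd
      rw [abs_lt] at h1 h2 h3
      have : M1 n = iidSumProb p 2 n / p n - L1 n
          - ∑ j ∈ Finset.range (M+1), p j * (p (n-j) / p n) := by
        rw [show (2:ℕ) = 1 + 1 from rfl, hd]; ring
      rw [this]
      linarith [h1.1, h1.2, h2.1, h2.2, h3.1, h3.2]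
    -- middle bound for the (ℓ+1)-fold sum
    have EMf : ∀ᶠ n in atTop, 0 ≤ Mf n ∧ Mf n ≤ (c+1) * M1 n := by
      filter_upwards [hpos, eventually_ge_atTop (2*M+2)] with n hpn hn
      constructor
      · apply div_nonneg _ hpn.le
        exact Finset.sum_nonneg fun k _ =>
          mul_nonneg (hp0 k) (iidSumProb_nonneg p hp0 ℓ _)
      · have hterm : ∑ k ∈ Finset.Ico (M+1) (n-M), p k * iidSumProb p ℓ (n-k)
            ≤ (c+1) * ∑ k ∈ Finset.Ico (M+1) (n-M), p k * p (n-k) := by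
          rw [Finset.mul_sum]
          refine Finset.sum_le_sum fun k hk => ?_
          rw [Finset.mem_Ico] at hk
          have hnk : n0 ≤ n - k := by omega
          calc p k * iidSumProb p ℓ (n-k) ≤ p k * ((c+1) * p (n-k)) :=
                mul_le_mul_of_nonneg_left (hn0 _ hnk) (hp0 k)
            _ = (c+1) * (p k * p (n-k)) := by ring
        rw [show (c+1) * M1 n = ((c+1) * ∑ k ∈ Finset.Ico (M+1) (n-M), p k * p (n-k)) / p n by
          rw [mul_div_assoc]]
        exact div_le_div_of_nonneg_right hterm hpn.le
    have final : ∀ᶠ n in atTop,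
        dist (iidSumProb p (ℓ+1) n / p n) (((ℓ+1 : ℕ)) : ℝ) < ε := by
      filter_upwards [EL, ER, EM1, EMf, eventually_ge_atTop (2*M+2)] with n h1 h2 h3 h4 h5
      have hfd : iidSumProb p (ℓ+1) n / p n = Lf n + Mf n + Rf n := hdec ℓ n h5
      rw [Real.dist_eq, show (((ℓ+1 : ℕ)) : ℝ) = c + 1 by rw [hc]; push_cast; ring]
      rw [abs_lt] at h1 h2 ⊢
      obtain ⟨h40, h41⟩ := h4
      have hc1 : (0:ℝ) ≤ c + 1 := by linarith
      have hMfub : Mf n ≤ (c+1) * (2 - 2*F + 3*δ) :=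
        le_trans h41 (mul_le_mul_of_nonneg_left h3 hc1)
      have hFc_ub : F * c ≤ c := by nlinarith
      have hFc_lb : c - c*δ ≤ F * c := by nlinarith
      have hMfub2 : Mf n ≤ 5*(c*δ) + 5*δ := by nlinarith
      have hδε2 : 5*(c*δ) + 8*δ = ε := by rw [← hδε]; ring
      have hcδ : (0:ℝ) ≤ c*δ := mul_nonneg hc0 hδpos.le
      constructor
      · linarith [h1.1, h2.1]
      · linarith [h1.2, h2.2]
    exact eventually_atTop.1 final

/-- **convergent case, number of components**: under the hypotheses of
the convergent case — `pX` the law of `X` (PGF `W(ρ_w z)/W(ρ_w)`), `pN` the law of `N`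
(PGF `V(W(ρ_w)z)/V(W(ρ_w))`), `0 < E[N] < ∞` (i.e. `0 < V'(W(ρ_w)) < ∞`), local
subexponentiality of `X`, and `P(S_N = n) ∼ E[N] P(X = n)` — the number of components
`N_n`, whose law via Kolchin's representation is
`P(N_n = ℓ) = pN ℓ · P(S_ℓ = n) / P(S_N = n)`, converges in distribution to the
size-biased variable `N̂` with `P(N̂ = ℓ) = ℓ pN ℓ / E[N]`
(PGF `z V'(W(ρ_w)z)/V'(W(ρ_w))`). -/
theorem convergent_case_number_of_components
    (pX pN : ℕ → ℝ)
    (hpX0 : ∀ k, 0 ≤ pX k) (hpX1 : ∑' k, pX k = 1)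
    (hpN0 : ∀ k, 0 ≤ pN k) (hpN1 : ∑' k, pN k = 1)
    (hENsum : Summable (fun ℓ : ℕ => (ℓ : ℝ) * pN ℓ))
    (hENpos : 0 < ∑' ℓ : ℕ, (ℓ : ℝ) * pN ℓ)
    (hXpos : ∀ᶠ n in atTop, 0 < pX n)
    (hXloc : ∀ y : ℕ, Tendsto (fun n => pX (n - y) / pX n) atTop (𝓝 1))
    (hXsubexp : Tendsto (fun n => iidSumProb pX 2 n / pX n) atTop (𝓝 2))
    (hSN : Tendsto
      (fun n => (∑' ℓ, pN ℓ * iidSumProb pX ℓ n) /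
        ((∑' ℓ : ℕ, (ℓ : ℝ) * pN ℓ) * pX n))
      atTop (𝓝 1)) :
    ∀ ℓ : ℕ,
      Tendsto
        (fun n => pN ℓ * iidSumProb pX ℓ n / ∑' j, pN j * iidSumProb pX j n)
        atTop
        (𝓝 ((ℓ : ℝ) * pN ℓ / ∑' j : ℕ, (j : ℝ) * pN j)) := by
  have hsX : Summable pX := by
    by_contra h
    rw [tsum_eq_zero_of_not_summable h] at hpX1
    norm_num at hpX1
  have hhX : HasSum pX 1 := hpX1 ▸ hsX.hasSum
  intro ℓ
  set E : ℝ := ∑' j : ℕ, (j:ℝ) * pN j with hE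
  set D : ℕ → ℝ := fun n => ∑' j, pN j * iidSumProb pX j n with hD
  have hEne : E ≠ 0 := hENpos.ne'
  have hkey := key_tendsto pX hpX0 hhX hXpos hXloc hXsubexp ℓ
  have hnum : Tendsto (fun n => pN ℓ * (iidSumProb pX ℓ n / pX n)) atTop
      (𝓝 (pN ℓ * (ℓ:ℝ))) := hkey.const_mul _
  have hden : Tendsto (fun n => E * (D n / (E * pX n))) atTop (𝓝 (E * 1)) :=
    hSN.const_mul E
  have hratio := hnum.div hden (by rw [mul_one]; exact hEne)
  have hlim : (pN ℓ * (ℓ:ℝ)) / (E * 1) = (ℓ:ℝ) * pN ℓ / E := by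
    rw [mul_one, mul_comm]
  rw [hlim] at hratio
  refine hratio.congr' ?_
  filter_upwards [hXpos] with n hpn
  show pN ℓ * (iidSumProb pX ℓ n / pX n) / (E * (D n / (E * pX n)))
      = pN ℓ * iidSumProb pX ℓ n / D n
  have h1 : E * (D n / (E * pX n)) = D n / pX n := by
    field_simp
  rw [h1]
  rcases eq_or_ne (D n) 0 with h|h
  · simp [h]
  · field_simp
end
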